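/- Define k : ℝ → ℝ by k(x) = −1/ln(−x) for x ≤ −e, k(x) = x/e for −e < x < e, and k(x) = 1/ln(x) for x ≥ e, and let M₁, M₂ > 0 and 0 < β < 1 be constants. Define h : ℝ → ℝ by h(x) = k(x)·x + M₁|x|^β + M₂. Then h is not sublinear: there do not exist constants D₁, D₂ ≥ 0 and γ with 0 ≤ γ < 1 such that |h(x)| ≤ D₁|x|^γ + D₂ for all x ∈ ℝ. -/

import Mathlib

/-- With `k(x) = −1/ln(−x)` for `x ≤ −e`, `k(x) = x/e` for `−e < x < e`,
`k(x) = 1/ln(x)` for `x ≥ e`, and `h(x) = k(x)·x + M₁|x|^β + M₂` (`M₁, M₂ > 0`,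
`0 < β < 1`), the function `h` is not sublinear: there are no `D₁, D₂ ≥ 0` and
`0 ≤ γ < 1` with `|h(x)| ≤ D₁|x|^γ + D₂` for all `x`. -/
theorem concrete_h_not_sublinear
    (k h : ℝ → ℝ)
    (hk : ∀ x : ℝ, k x =
      if x ≤ -(Real.exp 1) then -1 / Real.log (-x)
      else if x < Real.exp 1 then x / Real.exp 1
      else 1 / Real.log x)
    (M₁ M₂ β : ℝ) (hM₁ : 0 < M₁) (hM₂ : 0 < M₂) (hβ0 : 0 < β) (hβ1 : β < 1)
    (hh : ∀ x : ℝ, h x = k x * x + M₁ * |x| ^ β + M₂) :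
    ¬ ∃ D₁ D₂ γ : ℝ, 0 ≤ D₁ ∧ 0 ≤ D₂ ∧ 0 ≤ γ ∧ γ < 1 ∧
      ∀ x : ℝ, |h x| ≤ D₁ * |x| ^ γ + D₂ := by
  rintro ⟨D₁, D₂, γ, hD₁, hD₂, hγ0, hγ1, hbound⟩
  -- `exp((1-γ)t)/t → ∞`
  have htend : Filter.Tendsto (fun t : ℝ => Real.exp ((1 - γ) * t) / t ^ (1 : ℝ))
      Filter.atTop Filter.atTop :=
    tendsto_exp_mul_div_rpow_atTop 1 (1 - γ) (by linarith)
  have hev : ∀ᶠ t : ℝ in Filter.atTop,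
      D₁ + D₂ < Real.exp ((1 - γ) * t) / t ^ (1 : ℝ) :=
    htend.eventually_gt_atTop _
  obtain ⟨t, htgt, ht1⟩ := (hev.and (Filter.eventually_ge_atTop (1 : ℝ))).exists
  set x := Real.exp t with hx
  have hxe : Real.exp 1 ≤ x := Real.exp_le_exp.2 ht1
  have hxpos : 0 < x := Real.exp_pos t
  have hlog : Real.log x = t := Real.log_exp t
  have ht0 : 0 < t := lt_of_lt_of_le one_pos ht1
  -- k x = 1 / log x
  have hkx : k x = 1 / Real.log x := by
    rw [hk x]
    rw [if_neg, if_neg]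
    · exact not_lt.2 hxe
    · intro hcon
      have : (0:ℝ) < Real.exp 1 := Real.exp_pos 1
      linarith [hxpos]
  -- h x ≥ x / log x
  have hhx : x / t ≤ h x := by
    have h1 : k x * x = x / t := by rw [hkx, hlog]; field_simp
    have h2 : 0 ≤ M₁ * |x| ^ β := by positivity
    rw [hh x, h1]; linarith
  have hhpos : 0 < h x := lt_of_lt_of_le (by positivity) hhx
  have hb := hbound x
  rw [abs_of_pos hhpos] at hb
  have habs : |x| = x := abs_of_pos hxpos
  rw [habs] at hb
  have hxg : x ^ γ = Real.exp (γ * t) := by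
    rw [Real.rpow_def_of_pos hxpos, hlog, mul_comm]
  -- x / t ≤ D₁ * exp(γ t) + D₂ ≤ (D₁ + D₂) exp(γ t)
  have hexpγ : 1 ≤ Real.exp (γ * t) := Real.one_le_exp (by positivity)
  have key : x / t ≤ (D₁ + D₂) * Real.exp (γ * t) := by
    calc x / t ≤ h x := hhx
      _ ≤ D₁ * x ^ γ + D₂ := hb
      _ = D₁ * Real.exp (γ * t) + D₂ := by rw [hxg]
      _ ≤ D₁ * Real.exp (γ * t) + D₂ * Real.exp (γ * t) := by nlinarith
      _ = (D₁ + D₂) * Real.exp (γ * t) := by ring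
  -- hence exp((1-γ)t)/t ≤ D₁ + D₂, contradiction
  have hfinal : Real.exp ((1 - γ) * t) / t ^ (1 : ℝ) ≤ D₁ + D₂ := by
    have hexppos : (0:ℝ) < Real.exp (γ * t) := Real.exp_pos _
    rw [Real.rpow_one, div_le_iff₀ ht0]
    have hE : Real.exp ((1 - γ) * t) * Real.exp (γ * t) = x := by
      rw [← Real.exp_add]; ring_nf; exact hx.symm
    have hkey2 : x ≤ (D₁ + D₂) * t * Real.exp (γ * t) := by
      have h' := (div_le_iff₀ ht0).1 key
      nlinarith
    rw [← hE] at hkey2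
    exact le_of_mul_le_mul_right hkey2 hexppos
  linarith
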